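/- Let σ : ℕ → ℂ be bounded and δ ∈ (0,1). Define y(j) = (1/(1+r_j)) · Σ_{k=j}^{j+r_j} σ(k), where r_j = ⌊δ√j⌋. Then sup_{j ∈ ℕ} √(j+1)·|y(j+1) - y(j)| ≤ 4√2·‖σ‖_∞/δ; in particular y is Lipschitz continuous with respect to the sqrt-distance. -/

import Mathlib

theorem vallee_poussin_mean_lipschitz (σ : ℕ → ℂ) (M : ℝ)
    (hM : ∀ n, ‖σ n‖ ≤ M)
    (δ : ℝ) (hδ0 : 0 < δ) (hδ1 : δ < 1) :
    ∀ j : ℕ,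
      Real.sqrt (j + 1) *
        ‖((1 / ((Nat.floor (δ * Real.sqrt (j + 1)) : ℂ) + 1)) *
              ∑ k ∈ Finset.Icc (j + 1) (j + 1 + Nat.floor (δ * Real.sqrt (j + 1))), σ k
            - (1 / ((Nat.floor (δ * Real.sqrt j) : ℂ) + 1)) *
              ∑ k ∈ Finset.Icc j (j + Nat.floor (δ * Real.sqrt j)), σ k)‖
        ≤ 4 * Real.sqrt 2 * M / δ := by
  intro j
  have hM0 : 0 ≤ M := le_trans (norm_nonneg _) (hM 0)
  have hj0 : (0:ℝ) ≤ (j:ℝ) := Nat.cast_nonneg j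
  set r : ℕ := Nat.floor (δ * Real.sqrt j) with hrdef
  set s : ℕ := Nat.floor (δ * Real.sqrt ((j:ℝ) + 1)) with hsdef
  have hsq : Real.sqrt j ^ 2 = j := Real.sq_sqrt hj0
  have hsqnn : 0 ≤ Real.sqrt j := Real.sqrt_nonneg _
  have hsqrt1 : Real.sqrt ((j:ℝ) + 1) ≤ Real.sqrt j + 1 := by
    rw [show Real.sqrt j + 1 = Real.sqrt ((Real.sqrt j + 1)^2) by
      rw [Real.sqrt_sq (by positivity)]]
    apply Real.sqrt_le_sqrt
    nlinarith
  have hrs : r ≤ s := by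
    apply Nat.floor_le_floor
    apply mul_le_mul_of_nonneg_left _ hδ0.le
    exact Real.sqrt_le_sqrt (by linarith)
  have hrlt : δ * Real.sqrt j < (r:ℝ) + 1 := Nat.lt_floor_add_one _
  have hsr : s ≤ r + 1 := by
    have h2 : δ * Real.sqrt ((j:ℝ) + 1) < ((r + 2 : ℕ):ℝ) := by
      push_cast
      nlinarith
    have := (Nat.floor_lt (by positivity)).mpr h2
    omega
  -- sums
  set S : ℂ := ∑ k ∈ Finset.Icc j (j + r), σ k with hS
  set S' : ℂ := ∑ k ∈ Finset.Icc (j + 1) (j + 1 + s), σ k with hS'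
  set T : ℂ := ∑ k ∈ Finset.Ioc (j + r) (j + 1 + s), σ k with hT
  have hdecomp : S' - S = T - σ j := by
    have h1 : S = σ j + ∑ k ∈ Finset.Ioc j (j + r), σ k := by
      rw [hS, Finset.Icc_eq_cons_Ioc (Nat.le_add_right j r), Finset.sum_cons]
    have h2 : (∑ k ∈ Finset.Ioc j (j + r), σ k) + T = S' := by
      rw [hS', Finset.Icc_add_one_left_eq_Ioc]
      exact Finset.sum_Ioc_consecutive _ (Nat.le_add_right j r) (by omega)
    rw [h1, ← h2]; ring
  have habs_sum : ∀ (a b : ℕ), ‖∑ k ∈ Finset.Ioc a b, σ k‖ ≤ ((b - a : ℕ):ℝ) * M := by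
    intro a b
    calc ‖∑ k ∈ Finset.Ioc a b, σ k‖
        ≤ ∑ k ∈ Finset.Ioc a b, ‖σ k‖ := norm_sum_le _ _
      _ ≤ ∑ k ∈ Finset.Ioc a b, M := Finset.sum_le_sum fun k _ => hM k
      _ = ((b - a : ℕ):ℝ) * M := by rw [Finset.sum_const, Nat.card_Ioc, nsmul_eq_mul]
  have hTbound : ‖T‖ ≤ 2 * M := by
    calc ‖T‖ ≤ (((j + 1 + s) - (j + r) : ℕ):ℝ) * M := habs_sum _ _
      _ ≤ 2 * M := by
          apply mul_le_mul_of_nonneg_right _ hM0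
          have : (j + 1 + s) - (j + r) ≤ 2 := by omega
          exact_mod_cast this
  have hSbound : ‖S‖ ≤ ((r:ℝ) + 1) * M := by
    calc ‖S‖ ≤ ∑ k ∈ Finset.Icc j (j + r), ‖σ k‖ :=
          norm_sum_le _ _
      _ ≤ ∑ k ∈ Finset.Icc j (j + r), M := Finset.sum_le_sum fun k _ => hM k
      _ = ((j + r + 1 - j : ℕ):ℝ) * M := by rw [Finset.sum_const, Nat.card_Icc, nsmul_eq_mul]
      _ = ((r:ℝ) + 1) * M := by
          rw [show j + r + 1 - j = r + 1 by omega]; push_cast; ring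
  have hS'Sbound : ‖S' - S‖ ≤ 3 * M := by
    rw [hdecomp]
    calc ‖T - σ j‖ ≤ ‖T‖ + ‖-(σ j)‖ := by
          rw [sub_eq_add_neg]; exact norm_add_le _ _
      _ = ‖T‖ + ‖σ j‖ := by rw [norm_neg]
      _ ≤ 2 * M + M := add_le_add hTbound (hM j)
      _ = 3 * M := by ring
  -- complex denominators
  have has : ((s:ℂ) + 1) ≠ 0 := Nat.cast_add_one_ne_zero s
  have har : ((r:ℂ) + 1) ≠ 0 := Nat.cast_add_one_ne_zero r
  have habs_s : ‖(s:ℂ) + 1‖ = (s:ℝ) + 1 := by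
    rw [show ((s:ℂ) + 1) = (((s+1:ℕ)):ℂ) by push_cast; ring, Complex.norm_natCast]
    push_cast; ring
  have habs_r : ‖(r:ℂ) + 1‖ = (r:ℝ) + 1 := by
    rw [show ((r:ℂ) + 1) = (((r+1:ℕ)):ℂ) by push_cast; ring, Complex.norm_natCast]
    push_cast; ring
  have habs_rs : ‖(r:ℂ) - (s:ℂ)‖ ≤ 1 := by
    rw [show ((r:ℂ) - (s:ℂ)) = -(((s - r : ℕ)):ℂ) by
      push_cast [Nat.cast_sub hrs]; ring]
    rw [norm_neg, Complex.norm_natCast]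
    have : (s - r : ℕ) ≤ 1 := by omega
    exact_mod_cast this
  have hDeq : (1 / ((s:ℂ) + 1)) * S' - (1 / ((r:ℂ) + 1)) * S
      = (1 / ((s:ℂ) + 1)) * (S' - S)
        + (((r:ℂ) - (s:ℂ)) / (((s:ℂ) + 1) * ((r:ℂ) + 1))) * S := by
    field_simp
    ring
  have hrpos : (0:ℝ) < (r:ℝ) + 1 := by positivity
  have hspos : (0:ℝ) < (s:ℝ) + 1 := by positivity
  have hsr' : (r:ℝ) + 1 ≤ (s:ℝ) + 1 := by
    have : (r:ℝ) ≤ (s:ℝ) := by exact_mod_cast hrs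
    linarith
  have hDbound : ‖(1 / ((s:ℂ) + 1)) * S' - (1 / ((r:ℂ) + 1)) * S‖
      ≤ 4 * M / ((r:ℝ) + 1) := by
    rw [hDeq]
    have h1 : ‖(1 / ((s:ℂ) + 1)) * (S' - S)‖ ≤ 3 * M / ((r:ℝ) + 1) := by
      rw [norm_mul, norm_div, norm_one, habs_s]
      calc (1 / ((s:ℝ) + 1)) * ‖S' - S‖
          ≤ (1 / ((r:ℝ) + 1)) * (3 * M) :=
            mul_le_mul (one_div_le_one_div_of_le hrpos hsr') hS'Sbound
              (norm_nonneg _) (by positivity)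
        _ = 3 * M / ((r:ℝ) + 1) := by ring
    have h2 : ‖(((r:ℂ) - (s:ℂ)) / (((s:ℂ) + 1) * ((r:ℂ) + 1))) * S‖
        ≤ M / ((r:ℝ) + 1) := by
      rw [norm_mul, norm_div, norm_mul, habs_s, habs_r]
      have hnum : ‖(r:ℂ) - (s:ℂ)‖ * ‖S‖ ≤ 1 * (((r:ℝ) + 1) * M) :=
        mul_le_mul habs_rs hSbound (norm_nonneg _) zero_le_one
      calc ‖(r:ℂ) - (s:ℂ)‖ / (((s:ℝ) + 1) * ((r:ℝ) + 1)) * ‖S‖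
          = (‖(r:ℂ) - (s:ℂ)‖ * ‖S‖) / (((s:ℝ) + 1) * ((r:ℝ) + 1)) := by
            ring
        _ ≤ (1 * (((r:ℝ) + 1) * M)) / (((s:ℝ) + 1) * ((r:ℝ) + 1)) := by
            gcongr
        _ = M / ((s:ℝ) + 1) := by field_simp
        _ ≤ M / ((r:ℝ) + 1) := by gcongr
    calc ‖(1 / ((s:ℂ) + 1)) * (S' - S)
          + (((r:ℂ) - (s:ℂ)) / (((s:ℂ) + 1) * ((r:ℂ) + 1))) * S‖
        ≤ ‖(1 / ((s:ℂ) + 1)) * (S' - S)‖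
          + ‖(((r:ℂ) - (s:ℂ)) / (((s:ℂ) + 1) * ((r:ℂ) + 1))) * S‖ :=
          norm_add_le _ _
      _ ≤ 3 * M / ((r:ℝ) + 1) + M / ((r:ℝ) + 1) := add_le_add h1 h2
      _ = 4 * M / ((r:ℝ) + 1) := by ring
  -- key scaling inequality
  have hkey : δ * Real.sqrt ((j:ℝ) + 1) ≤ Real.sqrt 2 * ((r:ℝ) + 1) := by
    have h2 : (1:ℝ) ≤ Real.sqrt 2 := by
      rw [show (1:ℝ) = Real.sqrt 1 by rw [Real.sqrt_one]]
      exact Real.sqrt_le_sqrt (by norm_num)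
    rcases Nat.eq_zero_or_pos j with hj | hj
    · subst hj
      simp only [Nat.cast_zero, zero_add, Real.sqrt_one, mul_one]
      have : (0:ℝ) ≤ (r:ℝ) := Nat.cast_nonneg r
      nlinarith
    · have hj1 : (1:ℝ) ≤ (j:ℝ) := by exact_mod_cast hj
      have h3 : Real.sqrt ((j:ℝ) + 1) ≤ Real.sqrt 2 * Real.sqrt j := by
        rw [← Real.sqrt_mul (by norm_num)]
        exact Real.sqrt_le_sqrt (by nlinarith)
      calc δ * Real.sqrt ((j:ℝ) + 1) ≤ δ * (Real.sqrt 2 * Real.sqrt j) :=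
            mul_le_mul_of_nonneg_left h3 hδ0.le
        _ = Real.sqrt 2 * (δ * Real.sqrt j) := by ring
        _ ≤ Real.sqrt 2 * ((r:ℝ) + 1) :=
            mul_le_mul_of_nonneg_left hrlt.le (Real.sqrt_nonneg 2)
  -- conclude
  have hsqrtj1 : 0 ≤ Real.sqrt ((j:ℝ) + 1) := Real.sqrt_nonneg _
  calc Real.sqrt ((j:ℝ) + 1)
        * ‖(1 / ((s:ℂ) + 1)) * S' - (1 / ((r:ℂ) + 1)) * S‖
      ≤ Real.sqrt ((j:ℝ) + 1) * (4 * M / ((r:ℝ) + 1)) :=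
        mul_le_mul_of_nonneg_left hDbound hsqrtj1
    _ ≤ 4 * Real.sqrt 2 * M / δ := by
        rw [show Real.sqrt ((j:ℝ) + 1) * (4 * M / ((r:ℝ) + 1))
            = (Real.sqrt ((j:ℝ) + 1) * (4 * M)) / ((r:ℝ) + 1) from
          (mul_div_assoc _ _ _).symm]
        rw [div_le_div_iff₀ hrpos hδ0]
        have hs2 : (0:ℝ) ≤ Real.sqrt 2 := Real.sqrt_nonneg 2
        nlinarith [mul_le_mul_of_nonneg_left hkey (by positivity : (0:ℝ) ≤ 4 * M)]
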